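/- For all n ≥ 0, the n-th derivative of sec(x) equals Q_n(tan(x))·sec(x), where Q_n is defined by Q_0(x) = 1 and Q_{n+1}(x) = (1+x^2)·Q_n'(x) + x·Q_n(x). -/

import Mathlib

open Polynomial

/-- Derivative polynomials for the secant: `Q 0 = 1`, `Q (n+1) = (1+X^2) * (Q n)' + X * Q n`. -/
noncomputable def secDerivPoly : ℕ → Polynomial ℝ
  | 0 => 1
  | n + 1 => (1 + X ^ 2) * derivative (secDerivPoly n) + X * secDerivPoly n

theorem iteratedDeriv_sec_eq (n : ℕ) (x : ℝ) (hx : Real.cos x ≠ 0) :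
    iteratedDeriv n (fun t => (Real.cos t)⁻¹) x =
      (secDerivPoly n).eval (Real.tan x) * (Real.cos x)⁻¹ := by
  induction n generalizing x with
  | zero => simp [secDerivPoly]
  | succ n ih =>
    rw [iteratedDeriv_succ]
    have hopen : IsOpen {y : ℝ | Real.cos y ≠ 0} :=
      isOpen_compl_singleton.preimage Real.continuous_cos
    have hev : iteratedDeriv n (fun t => (Real.cos t)⁻¹) =ᶠ[nhds x]
        fun t => (secDerivPoly n).eval (Real.tan t) * (Real.cos t)⁻¹ := by
      filter_upwards [hopen.mem_nhds hx] with y hy using ih y hy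
    rw [hev.deriv_eq]
    have h1 : HasDerivAt (fun t => (secDerivPoly n).eval (Real.tan t))
        (((secDerivPoly n).derivative.eval (Real.tan x)) * (1 / Real.cos x ^ 2)) x :=
      (Polynomial.hasDerivAt _ _).comp x (Real.hasDerivAt_tan hx)
    have h2 : HasDerivAt (fun t : ℝ => (Real.cos t)⁻¹)
        (-(-Real.sin x) / Real.cos x ^ 2) x := (Real.hasDerivAt_cos x).inv hx
    rw [(h1.fun_mul h2).deriv]
    simp only [secDerivPoly, eval_add, eval_mul, eval_X, eval_one, eval_pow]
    rw [Real.tan_eq_sin_div_cos]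
    field_simp
    ring_nf
    linear_combination (-(eval (Real.sin x * (Real.cos x)⁻¹) (derivative (secDerivPoly n)))) * Real.sin_sq_add_cos_sq x
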